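/- Schur product theorem: if A and B are n×n positive semi-definite complex matrices, then their entrywise (Schur) product A ∘ B, given by (A∘B)_{ij} = A_{ij} B_{ij}, is positive semi-definite. -/

import Mathlib

open ComplexOrder
theorem schur_product_theorem
    (n : ℕ) (A B : Matrix (Fin n) (Fin n) ℂ)
    (hA : A.PosSemidef) (hB : B.PosSemidef) :
    (Matrix.hadamard A B).PosSemidef := by
  obtain ⟨C, rfl⟩ : ∃ C : Matrix (Fin n) (Fin n) ℂ, A = C.conjTranspose * C := by
    open scoped MatrixOrder in exact CStarAlgebra.nonneg_iff_eq_star_mul_self.mp hA.nonneg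
  refine Matrix.posSemidef_iff_dotProduct_mulVec.mpr ⟨?_, ?_⟩
  · ext i j
    simp only [Matrix.conjTranspose_apply, Matrix.hadamard_apply, star_mul']
    rw [← Matrix.conjTranspose_apply, ← Matrix.conjTranspose_apply, hA.1, hB.1]
  · intro x
    have key : dotProduct (star x) ((Matrix.hadamard (C.conjTranspose * C) B).mulVec x)
        = ∑ k : Fin n, dotProduct (star (fun i => C k i * x i))
            (B.mulVec (fun i => C k i * x i)) := by
      simp only [dotProduct, Matrix.mulVec, Matrix.hadamard_apply, Matrix.mul_apply,
        Matrix.conjTranspose_apply, Pi.star_apply, Finset.mul_sum, Finset.sum_mul, star_mul']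
      conv_rhs => rw [Finset.sum_comm]
      refine Finset.sum_congr rfl fun i _ => ?_
      conv_rhs => rw [Finset.sum_comm]
      refine Finset.sum_congr rfl fun j _ => ?_
      refine Finset.sum_congr rfl fun k _ => ?_
      ring
    rw [key]
    exact Finset.sum_nonneg fun k _ => hB.dotProduct_mulVec_nonneg _
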